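/- arXiv:2311.12870 — 4 statements merged into one kernel-verified Lean document; each statement's English description precedes it below -/
import Mathlib

section
/- For every n ≥ 3 the sets F_{n−1} × ℝ³ and F_n are disjoint, i.e. F_{n−1} × ℝ³ ⊆ F_n^∁; consequently also 𝒮(F_{n−1} × ℝ³) ⊆ F_n^∁. -/
open MeasureTheory ENNReal

noncomputable section

/-- Momentum space `ℝ³`. -/
abbrev R3 : Type := EuclideanSpace ℝ (Fin 3)

/-- `pfun k = p_{n+1}(k₁,…,k_n) = e^{n+1} ∏_{i=1}^{n} (|k_i|² + 1)²` for `k : Fin n → ℝ³`. -/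
def pfun {n : ℕ} (k : Fin n → R3) : ℝ :=
  Real.exp (n + 1) * ∏ i, (‖k i‖ ^ 2 + 1) ^ 2

/-- `Eset n = E_{n+1} ⊆ (ℝ³)^{n+1}`:
`exp(p_{n+1}(k₁,…,k_n)/2) < |k_{n+1}| < exp(p_{n+1}(k₁,…,k_n))`. -/
def Eset (n : ℕ) : Set (Fin (n + 1) → R3) :=
  {k | Real.exp (pfun (fun i : Fin n => k i.castSucc) / 2) < ‖k (Fin.last n)‖ ∧
       ‖k (Fin.last n)‖ < Real.exp (pfun (fun i : Fin n => k i.castSucc))}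

/-- The symmetrizer `𝒮` on subsets of `(ℝ³)^n`: all tuples having a permutation in `X`. -/
def symmSet {n : ℕ} (X : Set (Fin n → R3)) : Set (Fin n → R3) :=
  {k | ∃ σ : Equiv.Perm (Fin n), (k ∘ σ) ∈ X}

/-- `extendSet X = X × ℝ³ ⊆ (ℝ³)^{n+1}` for `X ⊆ (ℝ³)^n`. -/
def extendSet {n : ℕ} (X : Set (Fin n → R3)) : Set (Fin (n + 1) → R3) :=
  {k | (fun i : Fin n => k i.castSucc) ∈ X}

/-- `Fset n = F_{n+1}`: `F₁ = ∅`, `F_{n} = 𝒮((F_{n−1}^∁ × ℝ³) ∩ E_n)`. -/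
def Fset : (n : ℕ) → Set (Fin (n + 1) → R3)
  | 0 => ∅
  | n + 1 => symmSet (extendSet (Fset n)ᶜ ∩ Eset (n + 1))

/-- A representative of a vector of the Fock space: component `n` is a function of
`(k₁,…,k_n; p)`, i.e. of `n + 1` points of `ℝ³`. -/
abbrev FockRep : Type := (n : ℕ) → (Fin (n + 1) → R3) → ℂ

/-- Remove the `i`-th entry of a tuple. -/
def removeAt {n : ℕ} (i : Fin (n + 1)) (f : Fin (n + 1) → R3) : Fin n → R3 :=
  fun j => f (i.succAbove j)

/-- `Â⁺_m` : `(Â⁺_m ψ)(k₁,…,k_{m+1};p) = (m+1)^{-1/2} ∑_i |k_i|^{-1/2} ψ(…,k̂_i,…; p + k_i)`. -/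
def Aplus (m : ℕ) (ψ : (Fin (m + 1) → R3) → ℂ) : (Fin (m + 2) → R3) → ℂ :=
  fun x =>
    (Real.sqrt (m + 1) : ℂ)⁻¹ *
      ∑ i : Fin (m + 1),
        (Real.sqrt ‖x i.castSucc‖ : ℂ)⁻¹ *
          ψ (Fin.snoc (removeAt i fun j : Fin (m + 1) => x j.castSucc)
              (x (Fin.last (m + 1)) + x i.castSucc))

/-- `Aminus t = Â⁻_{t+1}` : the full annihilation-type operator. -/
def Aminus (t : ℕ) (ψ : (Fin (t + 2) → R3) → ℂ) : (Fin (t + 1) → R3) → ℂ :=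
  fun x =>
    (Real.sqrt (t + 1) : ℂ)⁻¹ *
      ∑ i : Fin (t + 1),
        ∫ w : R3, (Real.sqrt ‖w‖ : ℂ)⁻¹ *
          ψ (Fin.snoc (Fin.insertNth i w fun j : Fin t => x j.castSucc)
              (x (Fin.last t) - w))

/-- `AminusL t l = Â⁻_{t+1, l}` : the single term of `Â⁻_{t+1}` where the integration
variable is inserted at position `l`. -/
def AminusL (t : ℕ) (l : Fin (t + 1)) (ψ : (Fin (t + 2) → R3) → ℂ) :
    (Fin (t + 1) → R3) → ℂ :=
  fun x =>
    (Real.sqrt (t + 1) : ℂ)⁻¹ *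
      ∫ w : R3, (Real.sqrt ‖w‖ : ℂ)⁻¹ *
        ψ (Fin.snoc (Fin.insertNth l w fun j : Fin t => x j.castSucc)
            (x (Fin.last t) - w))

/-- `Â⁻_m χ_m`, with `Â⁻₀ := 0`. -/
def AminusComp : (m : ℕ) → ((Fin (m + 1) → R3) → ℂ) → (Fin m → R3) → ℂ
  | 0, _ => 0
  | t + 1, ψ => Aminus t ψ

/-- The full (formal) operator `Â` : `(Âψ)_n = Â⁺_{n−1}ψ_{n−1} + Â⁻_{n+1}ψ_{n+1}`,
with `Â⁺_{−1} := 0`. -/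
def Aop (ψ : FockRep) : FockRep := fun n =>
  match n with
  | 0 => Aminus 0 (ψ 1)
  | n + 1 => fun x => Aplus n (ψ n) x + Aminus (n + 1) (ψ (n + 2)) x

/-- `Tset n` is the set whose indicator gives `1_T` on component `n`:
`∅` for `n = 0` and `F_n × ℝ³` for `n ≥ 1`. -/
def Tset : (n : ℕ) → Set (Fin (n + 1) → R3)
  | 0 => ∅
  | n + 1 => extendSet (Fset n)

/-- The operator `1_T`. -/
def oneT (ψ : FockRep) : FockRep := fun n => (Tset n).indicator (ψ n)

/-- The operator `1_{T^∁}`. -/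
def oneTc (ψ : FockRep) : FockRep := fun n => ((Tset n)ᶜ).indicator (ψ n)

/-- The operator `Â⁺`: `(Â⁺ψ)_n = Â⁺_{n−1}ψ_{n−1}`, `(Â⁺ψ)₀ = 0`. -/
def AplusOp (ψ : FockRep) : FockRep := fun n =>
  match n with
  | 0 => 0
  | n + 1 => Aplus n (ψ n)

/-- `‖ψ‖² = ∑_n ‖ψ_n‖²_{L²}` (in `ℝ≥0∞`). -/
def HnormSq (ψ : FockRep) : ℝ≥0∞ := ∑' n, eLpNorm (ψ n) 2 volume ^ 2

/-- Membership in the Hilbert space `H`. -/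
def memH (ψ : FockRep) : Prop := (∀ n, MemLp (ψ n) 2 volume) ∧ HnormSq ψ < ⊤

/-- `‖1_T Â⁺ 1_{T^∁} ψ‖²`. -/
def VnormSq (ψ : FockRep) : ℝ≥0∞ := HnormSq (oneT (AplusOp (oneTc ψ)))

/-- `ψ ∈ U`, i.e. `ψ ∈ H` and `Âψ ∈ H`. -/
def memU (ψ : FockRep) : Prop := memH ψ ∧ memH (Aop ψ)

/-- `ψ ∈ V`, i.e. `ψ ∈ H` and `‖1_T Â⁺ 1_{T^∁} ψ‖ < ∞`. -/
def memV (ψ : FockRep) : Prop := memH ψ ∧ VnormSq ψ < ⊤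

/-- The inner product of `H` (conjugate-linear in the first argument). -/
def Hinner (φ ψ : FockRep) : ℂ := ∑' n, ∫ x, (starRingEnd ℂ) (φ n x) * ψ n x

/-- `‖φ − ψ‖²`. -/
def distSq (φ ψ : FockRep) : ℝ≥0∞ :=
  ∑' n, eLpNorm (fun x => φ n x - ψ n x) 2 volume ^ 2

/-- `χ_{n,j}` for `n = t + 2`: the `j`-th term of the recursion formula defining members
of `W` in terms of `prev = χ_{n−2}`, with vanishing-set `Dset = D_{n−1}`. -/
def chiTerm (t : ℕ) (Dset : Set (Fin (t + 1) → R3)) (prev : (Fin (t + 1) → R3) → ℂ)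
    (j : Fin (t + 1)) : (Fin (t + 3) → R3) → ℂ :=
  fun x =>
    let kk : Fin (t + 2) → R3 := fun i => x i.castSucc
    let p : R3 := x (Fin.last (t + 2))
    let kf : Fin (t + 1) → R3 := fun i => kk i.castSucc
    let kn : R3 := kk (Fin.last (t + 1))
    (((-Real.sqrt (t + 2) * (Eset (t + 1)).indicator (fun _ => (1 : ℝ)) kk *
          Dsetᶜ.indicator (fun _ => (1 : ℝ)) kf) /
        (2 * Real.pi * Real.sqrt (t + 1) * pfun kf * Real.sqrt (‖kn‖ ^ 5)) : ℝ) : ℂ) *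
      ((Real.sqrt ‖kf j‖ : ℂ)⁻¹ * prev (Fin.snoc (removeAt j kf) (p + kf j + kn)))

/-- The full recursion formula `χ_n = ∑_{j=1}^{n−1} χ_{n,j}` for `n = t + 2`. -/
def chiFormula (t : ℕ) (Dset : Set (Fin (t + 1) → R3)) (prev : (Fin (t + 1) → R3) → ℂ) :
    (Fin (t + 3) → R3) → ℂ :=
  fun x => ∑ j : Fin (t + 1), chiTerm t Dset prev j x

/-- `χ ∈ W`, with lowest index `m` and admissible set `D = D_{m+1}`. -/
def IsW (m : ℕ) (D : Set (Fin (m + 1) → R3)) (χ : FockRep) : Prop :=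
  memH χ ∧
  Fset m ⊆ D ∧ symmSet D = D ∧
  (∀ n, (¬ ∃ j : ℕ, n = m + 2 * j) → χ n = 0) ∧
  χ (m + 2) = chiFormula m D (χ m) ∧
  (∀ j : ℕ, χ (m + 2 * j + 4) = chiFormula (m + 2 * j + 2) ∅ (χ (m + 2 * j + 2))) ∧
  MemLp (AminusComp m (χ m)) 2 volume ∧
  MemLp ((extendSet D).indicator (Aplus m (χ m))) 2 volume

/-- Membership in the linear span of `W`. -/
def inSpanW (φ : FockRep) : Prop :=
  ∃ (k : ℕ) (c : Fin k → ℂ) (χs : Fin k → FockRep),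
    (∀ i, ∃ (m : ℕ) (D : Set (Fin (m + 1) → R3)), IsW m D (χs i)) ∧
    ∀ n x, φ n x = ∑ i, c i * χs i n x

/-- The shell `B_R ∖ B_{1/R} ⊆ ℝ³`. -/
def shellSet (R : ℝ) : Set R3 := {k | R⁻¹ ≤ ‖k‖ ∧ ‖k‖ < R}

/-- `(B_R ∖ B_{1/R})^n × ℝ³` as a subset of `(ℝ³)^{n+1}`. -/
def cutSet (R : ℝ) (n : ℕ) : Set (Fin (n + 1) → R3) :=
  {x | ∀ i : Fin n, x i.castSucc ∈ shellSet R}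

/-- The cut-off creation operator `Â^{R+}_m`. -/
def ARplus (R : ℝ) (m : ℕ) (ψ : (Fin (m + 1) → R3) → ℂ) : (Fin (m + 2) → R3) → ℂ :=
  (cutSet R (m + 1)).indicator (Aplus m ψ)

/-- The cut-off annihilation operator `Â^{R−}_{t+1}`. -/
def ARminus (R : ℝ) (t : ℕ) (ψ : (Fin (t + 2) → R3) → ℂ) : (Fin (t + 1) → R3) → ℂ :=
  (cutSet R t).indicator (Aminus t ((cutSet R (t + 1)).indicator ψ))

/-- `p'_{N+1}(i₁,…,i_N) = e^{N+1} ∏_l (i_l² + 1)²`. -/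
def pIdx (N : ℕ) (i : Fin N → ℕ) : ℝ :=
  Real.exp (N + 1) * ∏ l, ((i l : ℝ) ^ 2 + 1) ^ 2

/-- `X_{N,i} × ℝ³`: the product of spherical shells `i_l ≤ |k_l| < i_l + 1`
in the `k`-variables, with `p` free. -/
def Xshell (N : ℕ) (i : Fin N → ℕ) : Set (Fin (N + 1) → R3) :=
  {x | ∀ l : Fin N, (i l : ℝ) ≤ ‖x l.castSucc‖ ∧ ‖x l.castSucc‖ < (i l : ℝ) + 1}

lemma symmSet_perm {n : ℕ} {X : Set (Fin n → R3)} {k : Fin n → R3}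
    (h : k ∈ symmSet X) (σ : Equiv.Perm (Fin n)) : (k ∘ σ) ∈ symmSet X := by
  obtain ⟨ρ, hρ⟩ := h
  refine ⟨ρ.trans σ.symm, ?_⟩
  have he : (k ∘ σ) ∘ (ρ.trans σ.symm) = k ∘ ρ := by
    funext i; simp [Function.comp]
  rwa [he]

lemma fset_perm {n : ℕ} {k : Fin (n + 1) → R3} (σ : Equiv.Perm (Fin (n + 1)))
    (h : k ∈ Fset n) : (k ∘ σ) ∈ Fset n := by
  cases n with
  | zero => exact absurd h (by simp [Fset])
  | succ m => exact symmSet_perm h σ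

lemma mem_image_perm_castSucc {n : ℕ} (σ : Equiv.Perm (Fin (n + 1))) (a : Fin (n + 1)) :
    a ∈ (Finset.univ : Finset (Fin n)).image (fun i => σ i.castSucc) ↔
      a ≠ σ (Fin.last n) := by
  simp only [Finset.mem_image, Finset.mem_univ, true_and]
  constructor
  · rintro ⟨i, rfl⟩ h
    exact absurd (σ.injective h) (ne_of_lt (Fin.castSucc_lt_last i))
  · intro h
    have h1 : σ.symm a ≠ Fin.last n := fun e => h (by rw [← e, Equiv.apply_symm_apply])
    exact ⟨(σ.symm a).castPred h1, by rw [Fin.castSucc_castPred, Equiv.apply_symm_apply]⟩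

lemma one_le_factor (s : ℝ) : (1 : ℝ) ≤ (s ^ 2 + 1) ^ 2 := by nlinarith [sq_nonneg s]

lemma two_le_exp_cast (n : ℕ) : (2 : ℝ) ≤ Real.exp ((n : ℝ) + 1) := by
  have h1 := Real.add_one_le_exp ((n : ℝ) + 1)
  have h2 : (0 : ℝ) ≤ (n : ℝ) := Nat.cast_nonneg n
  linarith

lemma aux_one_le_finprod {α : Type*} {s : Finset α} {f : α → ℝ} (h : ∀ a ∈ s, 1 ≤ f a) :
    1 ≤ ∏ a ∈ s, f a := by
  have h2 := Finset.prod_le_prod (f := fun _ => (1 : ℝ)) (g := f) (fun a _ => zero_le_one) h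
  simpa using h2

lemma aux_single_le_finprod {α : Type*} [DecidableEq α] {s : Finset α} {f : α → ℝ}
    (h : ∀ a ∈ s, 1 ≤ f a) {a : α} (ha : a ∈ s) : f a ≤ ∏ b ∈ s, f b := by
  rw [← Finset.mul_prod_erase s f ha]
  have h1 : 1 ≤ ∏ b ∈ s.erase a, f b :=
    aux_one_le_finprod (fun b hb => h b (Finset.mem_of_mem_erase hb))
  nlinarith [h a ha]

lemma aux_subset_le_finprod {α : Type*} [DecidableEq α] {s t : Finset α} {f : α → ℝ} (hst : s ⊆ t)
    (h : ∀ a ∈ t, 1 ≤ f a) : ∏ a ∈ s, f a ≤ ∏ a ∈ t, f a := by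
  rw [← Finset.prod_sdiff hst]
  have h1 : 1 ≤ ∏ a ∈ t \ s, f a := aux_one_le_finprod (fun a ha => h a (Finset.mem_sdiff.mp ha).1)
  have h2 : (0 : ℝ) < ∏ a ∈ s, f a :=
    lt_of_lt_of_le one_pos (aux_one_le_finprod fun a ha => h a (hst ha))
  nlinarith

lemma gt_of_gt_exp {a b p : ℝ} (hp : 2 * (b ^ 2 + 1) ^ 2 ≤ p) (ha : Real.exp (p / 2) < a) :
    b < a := by
  have h1 : (b ^ 2 + 1) ^ 2 + 1 ≤ Real.exp ((b ^ 2 + 1) ^ 2) := Real.add_one_le_exp _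
  have h2 : Real.exp ((b ^ 2 + 1) ^ 2) ≤ Real.exp (p / 2) := Real.exp_le_exp.2 (by linarith)
  nlinarith [sq_nonneg b, sq_nonneg (b - 1)]

/-- For every `n ≥ 3` (here `n = t + 3`), the sets `F_{n−1} × ℝ³` and
`F_n` are disjoint, i.e. `F_{n−1} × ℝ³ ⊆ F_n^∁`; consequently also
`𝒮(F_{n−1} × ℝ³) ⊆ F_n^∁`. -/
theorem statement3 (t : ℕ) :
    extendSet (Fset (t + 1)) ⊆ (Fset (t + 2))ᶜ ∧
    symmSet (extendSet (Fset (t + 1))) ⊆ (Fset (t + 2))ᶜ := by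
  have main : extendSet (Fset (t + 1)) ⊆ (Fset (t + 2))ᶜ := by
    intro x hx hxF
    have hx0 := hx
    obtain ⟨σ, hσc, hσE⟩ := (hxF : x ∈ symmSet (extendSet (Fset (t + 1))ᶜ ∩ Eset (t + 2)))
    obtain ⟨τ, hτc, hτE⟩ :=
      (hx0 : (fun i : Fin (t + 2) => x i.castSucc) ∈
        symmSet (extendSet (Fset t)ᶜ ∩ Eset (t + 1)))
    by_cases hlast : σ (Fin.last (t + 2)) = Fin.last (t + 2)
    · -- Case A: the big coordinate is the free one; contradicts the complement condition.
      apply hσc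
      have hne : ∀ i : Fin (t + 2), σ i.castSucc ≠ Fin.last (t + 2) := by
        intro i h
        exact absurd (σ.injective (h.trans hlast.symm)) (ne_of_lt (Fin.castSucc_lt_last i))
      have hfinj : Function.Injective (fun i : Fin (t + 2) => (σ i.castSucc).castPred (hne i)) := by
        intro a b h
        have h2 : (σ a.castSucc) = (σ b.castSucc) := by
          have h3 := congrArg Fin.castSucc h
          simpa [Fin.castSucc_castPred] using h3
        exact Fin.castSucc_injective _ (σ.injective h2)
      let τ' : Equiv.Perm (Fin (t + 2)) :=
        Equiv.ofBijective _ (Finite.injective_iff_bijective.mp hfinj)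
      have key : (fun i : Fin (t + 2) => (x ∘ σ) i.castSucc)
          = (fun i : Fin (t + 2) => x i.castSucc) ∘ τ' := by
        funext i
        show x (σ i.castSucc) = x (((σ i.castSucc).castPred (hne i)).castSucc)
        rw [Fin.castSucc_castPred]
      exact key ▸ fset_perm τ' hx
    · -- Case B: the big coordinate of the F_{n} certificate is among the first n-1.
      set j : Fin (t + 2) := (σ (Fin.last (t + 2))).castPred hlast with hjdef
      have hjc : j.castSucc = σ (Fin.last (t + 2)) := Fin.castSucc_castPred _ _
      set m : Fin (t + 2) := τ (Fin.last (t + 1)) with hmdef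
      set F : Fin (t + 3) → ℝ := fun a => (‖x a‖ ^ 2 + 1) ^ 2 with hFdef
      have hF1 : ∀ a, (1 : ℝ) ≤ F a := fun a => one_le_factor _
      set S : Finset (Fin (t + 3)) :=
        Finset.univ.image (fun i : Fin (t + 2) => σ i.castSucc) with hSdef
      set T : Finset (Fin (t + 3)) :=
        Finset.univ.image (fun i : Fin (t + 1) => ((τ i.castSucc).castSucc : Fin (t + 3))) with hTdef
      set p : ℝ := pfun (fun i : Fin (t + 2) => (x ∘ σ) i.castSucc) with hpdef
      set q : ℝ :=
        pfun (fun i : Fin (t + 1) => ((fun i : Fin (t + 2) => x i.castSucc) ∘ τ) i.castSucc)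
        with hqdef
      have hp_eq : p = Real.exp ((t + 2 : ℕ) + 1) * ∏ a ∈ S, F a := by
        rw [hpdef, pfun, hSdef, Finset.prod_image]
        · norm_num
          rfl
        · intro a _ b _ h
          exact Fin.castSucc_injective _ (σ.injective h)
      have hq_eq : q = Real.exp ((t + 1 : ℕ) + 1) * ∏ a ∈ T, F a := by
        rw [hqdef, pfun, hTdef, Finset.prod_image]
        · norm_num
          rfl
        · intro a _ b _ h
          exact Fin.castSucc_injective _ (τ.injective (Fin.castSucc_injective _ h))
      have hT1 : (1 : ℝ) ≤ ∏ a ∈ T, F a := aux_one_le_finprod (fun a _ => hF1 a)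
      have hS1 : (1 : ℝ) ≤ ∏ a ∈ S, F a := aux_one_le_finprod (fun a _ => hF1 a)
      have hbigp : Real.exp (p / 2) < ‖x j.castSucc‖ := by
        have := hσE.1
        rwa [show (x ∘ σ) (Fin.last (t + 2)) = x j.castSucc by
          simp [Function.comp, hjc]] at this
      have hbigq : Real.exp (q / 2) < ‖x m.castSucc‖ ∧ ‖x m.castSucc‖ < Real.exp q := hτE
      by_cases hmj : m = j
      · -- the two big coordinates coincide: p ≥ 2q gives a contradiction
        have hTS : T ⊆ S := by
          intro a ha
          rw [hTdef, Finset.mem_image] at ha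
          obtain ⟨i, _, rfl⟩ := ha
          rw [hSdef, mem_image_perm_castSucc]
          rw [← hjc]
          intro h
          have h2 : τ i.castSucc = j := Fin.castSucc_injective _ h
          have h3 : τ i.castSucc = τ (Fin.last (t + 1)) := by rw [h2, ← hmj]
          exact absurd (τ.injective h3) (ne_of_lt (Fin.castSucc_lt_last i))
        have hprodle : ∏ a ∈ T, F a ≤ ∏ a ∈ S, F a :=
          aux_subset_le_finprod hTS (fun a _ => hF1 a)
        have hq_pos : 0 < q := by
          rw [hq_eq]
          have := two_le_exp_cast (t + 1)
          nlinarith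
        have hp2q : 2 * q ≤ p := by
          rw [hp_eq, hq_eq]
          have he2 : 2 * Real.exp ((t + 1 : ℕ) + 1) ≤ Real.exp ((t + 2 : ℕ) + 1) := by
            have h3 : Real.exp (((t + 2 : ℕ) : ℝ) + 1)
                = Real.exp (((t + 1 : ℕ) : ℝ) + 1) * Real.exp 1 := by
              rw [← Real.exp_add]; push_cast; ring_nf
            have h1 : (0 : ℝ) < Real.exp (((t + 1 : ℕ) : ℝ) + 1) := Real.exp_pos _
            rw [h3]
            nlinarith [Real.exp_one_gt_d9]
          have h0 : (0 : ℝ) < Real.exp ((t + 2 : ℕ) + 1) := Real.exp_pos _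
          nlinarith [Real.exp_pos (((t + 1 : ℕ) : ℝ) + 1)]
        have hlt : ‖x m.castSucc‖ < Real.exp (p / 2) := by
          calc ‖x m.castSucc‖ < Real.exp q := hbigq.2
          _ ≤ Real.exp (p / 2) := Real.exp_le_exp.2 (by linarith)
        rw [hmj] at hlt
        linarith
      · -- distinct big coordinates: each strictly dominates the other, contradiction
        have hmS : m.castSucc ∈ S := by
          rw [hSdef, mem_image_perm_castSucc, ← hjc]
          exact fun h => hmj (Fin.castSucc_injective _ h)
        have hjT : j.castSucc ∈ T := by
          rw [hTdef]
          have hj' : j ∈ (Finset.univ : Finset (Fin (t + 1))).image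
              (fun i => τ i.castSucc) := by
            rw [mem_image_perm_castSucc]
            exact fun h => hmj h.symm
          rw [Finset.mem_image] at hj' ⊢
          obtain ⟨i, hi, hji⟩ := hj'
          exact ⟨i, hi, by rw [hji]⟩
        have hpm : 2 * F m.castSucc ≤ p := by
          rw [hp_eq]
          have h1 : F m.castSucc ≤ ∏ a ∈ S, F a :=
            aux_single_le_finprod (fun a _ => hF1 a) hmS
          have h2 := two_le_exp_cast (t + 2)
          nlinarith [hF1 m.castSucc]
        have hqj : 2 * F j.castSucc ≤ q := by
          rw [hq_eq]
          have h1 : F j.castSucc ≤ ∏ a ∈ T, F a :=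
            aux_single_le_finprod (fun a _ => hF1 a) hjT
          have h2 := two_le_exp_cast (t + 1)
          nlinarith [hF1 j.castSucc]
        have hab : ‖x m.castSucc‖ < ‖x j.castSucc‖ := gt_of_gt_exp hpm hbigp
        have hba : ‖x j.castSucc‖ < ‖x m.castSucc‖ := gt_of_gt_exp hqj hbigq.1
        linarith
  refine ⟨main, ?_⟩
  rintro x ⟨σ, hσ⟩ hxF
  exact main hσ (fset_perm σ hxF)


end
end

section
/- Let χ ∈ W have lowest index m. Then for every n ∈ {m+2, m+4, m+6, …}, the function χ_n vanishes outside F_n × ℝ³ (its support is contained in F_n × ℝ³). -/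
open MeasureTheory ENNReal

noncomputable section

-- ===== auxiliary lemmas =====

lemma g_ge_one (x : R3) : (1:ℝ) ≤ (‖x‖ ^ 2 + 1) ^ 2 := by
  nlinarith [sq_nonneg ‖x‖]

lemma norm_lt_exp_half (x : R3) : ‖x‖ < Real.exp ((‖x‖ ^ 2 + 1) ^ 2 / 2) := by
  have h1 := Real.add_one_le_exp ((‖x‖ ^ 2 + 1) ^ 2 / 2)
  nlinarith [sq_nonneg (‖x‖ - 1), sq_nonneg ‖x‖]

open Finset in
lemma one_le_prod_real {ι : Type*} [Fintype ι] (f : ι → ℝ) (hf : ∀ i, (1:ℝ) ≤ f i) :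
    (1:ℝ) ≤ ∏ i, f i := by
  have := Finset.prod_le_prod (s := (univ : Finset ι)) (f := fun _ => (1:ℝ)) (g := f)
    (fun i _ => zero_le_one) (fun i _ => hf i)
  simpa using this

open Finset in
lemma single_le_prod_real {ι : Type*} [Fintype ι] (f : ι → ℝ) (hf : ∀ i, (1:ℝ) ≤ f i)
    (a : ι) : f a ≤ ∏ i, f i := by
  classical
  rw [← Finset.mul_prod_erase univ f (mem_univ a)]
  have h1 : (1:ℝ) ≤ ∏ i ∈ univ.erase a, f i := by
    have := Finset.prod_le_prod (s := univ.erase a) (f := fun _ => (1:ℝ)) (g := f)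
      (fun i _ => zero_le_one) (fun i _ => hf i)
    simpa using this
  nlinarith [hf a]

lemma prod_perm_castSucc {N : ℕ} (g : Fin (N + 1) → ℝ) (σ : Equiv.Perm (Fin (N + 1))) :
    (∏ i : Fin N, g (σ i.castSucc)) * g (σ (Fin.last N)) = ∏ i, g i := by
  rw [← Equiv.prod_comp σ g, Fin.prod_univ_castSucc]

lemma Fset_perm {n : ℕ} {k : Fin (n + 1) → R3} (h : k ∈ Fset n) (ρ : Equiv.Perm (Fin (n + 1))) :
    (k ∘ ρ) ∈ Fset n := by
  match n with
  | 0 => simp [Fset] at h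
  | n + 1 =>
    obtain ⟨σ, hσ⟩ := h
    refine ⟨σ.trans ρ.symm, ?_⟩
    have heq : (k ∘ ⇑ρ) ∘ ⇑(σ.trans ρ.symm) = k ∘ ⇑σ := by
      funext i; simp [Function.comp]
    rw [heq]; exact hσ

lemma mem_Fset_succ {n : ℕ} {k : Fin (n + 2) → R3}
    (h1 : (fun i : Fin (n + 1) => k i.castSucc) ∉ Fset n)
    (h2 : k ∈ Eset (n + 1)) : k ∈ Fset (n + 1) := by
  refine ⟨Equiv.refl _, ?_, ?_⟩
  · exact h1
  · exact h2

lemma lemmaA {s : ℕ} (k : Fin (s + 2) → R3) (j : Fin (s + 2))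
    (h1 : removeAt j k ∈ Fset s) : k ∉ Fset (s + 1) := by
  intro h2
  obtain ⟨σ, hσA, hσE1, hσE2⟩ := h2
  by_cases hrj : σ (Fin.last (s + 1)) = j
  · -- the "last" slot of σ hits j : then (k∘σ∘castSucc) is a permutation of removeAt j k
    apply hσA
    have hne : ∀ i : Fin (s + 1), σ i.castSucc ≠ j := fun i hEq =>
      absurd (σ.injective (hEq.trans hrj.symm)) (Fin.castSucc_lt_last i).ne
    choose ρ0 hρ0 using fun i => Fin.exists_succAbove_eq (hne i)
    have hinj : Function.Injective ρ0 := fun a b hab =>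
      Fin.castSucc_injective _ (σ.injective (by rw [← hρ0 a, ← hρ0 b, hab]))
    have hbij := Finite.injective_iff_bijective.mp hinj
    have hfun : (fun i : Fin (s + 1) => (k ∘ ⇑σ) i.castSucc)
        = (removeAt j k) ∘ ⇑(Equiv.ofBijective ρ0 hbij) := by
      funext i
      simp only [Function.comp_apply, removeAt, Equiv.ofBijective_apply, hρ0 i]
    show (fun i : Fin (s + 1) => (k ∘ ⇑σ) i.castSucc) ∈ Fset s
    rw [hfun]
    exact Fset_perm h1 _
  · cases s with
    | zero => simp [Fset] at h1
    | succ s' =>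
      obtain ⟨τ, hτA, hτE1, hτE2⟩ := h1
      -- notation
      set G : Fin (s' + 3) → ℝ := fun i => (‖k i‖ ^ 2 + 1) ^ 2 with hG
      have hGone : ∀ i, (1:ℝ) ≤ G i := fun i => g_ge_one (k i)
      set r : Fin (s' + 3) := σ (Fin.last (s' + 2)) with hrdef
      set l : Fin (s' + 3) := j.succAbove (τ (Fin.last (s' + 1))) with hldef
      set A : ℝ := ∏ i : Fin (s' + 2), G (σ i.castSucc) with hAdef
      set B : ℝ := ∏ i : Fin (s' + 1), G (j.succAbove (τ i.castSucc)) with hBdef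
      set C : ℝ := ∏ i : Fin (s' + 2), G (j.succAbove i) with hCdef
      set Pi : ℝ := ∏ i : Fin (s' + 3), G i with hPidef
      have hA : A * G r = Pi := prod_perm_castSucc G σ
      have hB : B * G l = C := prod_perm_castSucc (fun i => G (j.succAbove i)) τ
      have hC : Pi = G j * C := Fin.prod_univ_succAbove G j
      have hA1 : (1:ℝ) ≤ A := one_le_prod_real _ (fun i => hGone _)
      have hB1 : (1:ℝ) ≤ B := one_le_prod_real _ (fun i => hGone _)
      -- the E-conditions
      have hP : pfun (fun i : Fin (s' + 2) => (k ∘ ⇑σ) i.castSucc)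
          = Real.exp ((s' + 2 : ℕ) + 1) * A := rfl
      have hQ : pfun (fun i : Fin (s' + 1) => (removeAt j k ∘ ⇑τ) i.castSucc)
          = Real.exp ((s' + 1 : ℕ) + 1) * B := rfl
      have hkr : (k ∘ ⇑σ) (Fin.last (s' + 2)) = k r := rfl
      have hkl : (removeAt j k ∘ ⇑τ) (Fin.last (s' + 1)) = k l := rfl
      rw [hP, hkr] at hσE1 hσE2
      rw [hQ, hkl] at hτE1 hτE2
      set P : ℝ := Real.exp ((s' + 2 : ℕ) + 1) * A with hPdef
      set Q : ℝ := Real.exp ((s' + 1 : ℕ) + 1) * B with hQdef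
      have hEpos2 : (1:ℝ) ≤ Real.exp ((s' + 1 : ℕ) + 1) := Real.one_le_exp (by positivity)
      by_cases hrl : r = l
      · -- the two "big" indices coincide : shells are disjoint
        have hgj : (1:ℝ) ≤ G j := hGone j
        have hgr : (1:ℝ) ≤ G r := hGone r
        have hexp1 : (2:ℝ) ≤ Real.exp 1 := by
          have := Real.exp_one_gt_d9; linarith
        have hE3 : Real.exp ((s' + 2 : ℕ) + 1)
            = Real.exp 1 * Real.exp ((s' + 1 : ℕ) + 1) := by
          rw [← Real.exp_add]; push_cast; ring_nf
        -- A = G j * B   (cancel G r , using r = l)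
        have hGr0 : G r ≠ 0 := by intro h0; rw [h0] at hgr; linarith
        have hAB : A = G j * B := by
          refine mul_right_cancel₀ hGr0 ?_
          rw [hA, hC, ← hB, hrl]
          ring
        have h2Q : 2 * Q ≤ P := by
          rw [hPdef, hQdef, hE3, hAB]
          have hBpos : (0:ℝ) < B := by linarith
          have hE2pos : (0:ℝ) < Real.exp ((s' + 1 : ℕ) + 1) := Real.exp_pos _
          have hEB : (0:ℝ) ≤ Real.exp ((s' + 1 : ℕ) + 1) * B :=
            le_of_lt (mul_pos hE2pos hBpos)
          have h21 : (2:ℝ) ≤ Real.exp 1 * G j := by nlinarith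
          calc 2 * (Real.exp ((s' + 1 : ℕ) + 1) * B)
              ≤ (Real.exp 1 * G j) * (Real.exp ((s' + 1 : ℕ) + 1) * B) :=
                mul_le_mul_of_nonneg_right h21 hEB
            _ = Real.exp 1 * Real.exp ((s' + 1 : ℕ) + 1) * (G j * B) := by ring
        have : Real.exp Q ≤ Real.exp (P / 2) := Real.exp_le_exp.mpr (by linarith)
        rw [← hrl] at hτE2
        linarith
      · -- the two "big" indices differ : mutual domination, contradiction
        -- G l ≤ A
        have hlr : σ.symm l ≠ Fin.last (s' + 2) := by
          intro hEq
          apply hrl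
          rw [hrdef, ← hEq, Equiv.apply_symm_apply]
        have hcl : σ (((σ.symm l).castPred hlr).castSucc) = l := by
          rw [Fin.castSucc_castPred]; exact σ.apply_symm_apply l
        have hglA : G l ≤ A := by
          have := single_le_prod_real (fun i : Fin (s' + 2) => G (σ i.castSucc))
            (fun i => hGone _) ((σ.symm l).castPred hlr)
          simpa [hcl] using this
        -- G r ≤ B
        obtain ⟨r', hr'⟩ := Fin.exists_succAbove_eq hrj
        have hr'ne : τ.symm r' ≠ Fin.last (s' + 1) := by
          intro hEq
          apply hrl
          rw [hldef, ← hr']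
          congr 1
          rw [← hEq, Equiv.apply_symm_apply]
        have hcr : j.succAbove (τ (((τ.symm r').castPred hr'ne).castSucc)) = r := by
          rw [Fin.castSucc_castPred, Equiv.apply_symm_apply, hr']
        have h5 : G (j.succAbove r') ≤ B := by
          have := single_le_prod_real (fun i : Fin (s' + 1) => G (j.succAbove (τ i.castSucc)))
            (fun i => hGone _) ((τ.symm r').castPred hr'ne)
          simpa [← hBdef] using this
        have hgrB : G r ≤ B := by rwa [hr'] at h5
        have hEpos3 : (1:ℝ) ≤ Real.exp ((s' + 2 : ℕ) + 1) := Real.one_le_exp (by positivity)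
        have hPgl : G l ≤ P := by
          rw [hPdef]
          have h4 : A ≤ Real.exp ((s' + 2 : ℕ) + 1) * A :=
            le_mul_of_one_le_left (by linarith) hEpos3
          linarith
        have hQgr : G r ≤ Q := by
          rw [hQdef]
          have h4 : B ≤ Real.exp ((s' + 1 : ℕ) + 1) * B :=
            le_mul_of_one_le_left (by linarith) hEpos2
          linarith
        have h1 : ‖k l‖ < Real.exp (P / 2) := by
          have h2 : Real.exp (G l / 2) ≤ Real.exp (P / 2) := Real.exp_le_exp.mpr (by linarith)
          have h3 : ‖k l‖ < Real.exp (G l / 2) := norm_lt_exp_half (k l)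
          linarith [h3, h2]
        have h1' : ‖k r‖ < Real.exp (Q / 2) := by
          have h2 : Real.exp (G r / 2) ≤ Real.exp (Q / 2) := Real.exp_le_exp.mpr (by linarith)
          have h3 : ‖k r‖ < Real.exp (G r / 2) := norm_lt_exp_half (k r)
          linarith [h3, h2]
        linarith

lemma chiTerm_eq_zero {t : ℕ} {Dset : Set (Fin (t + 1) → R3)}
    {prev : (Fin (t + 1) → R3) → ℂ} {j : Fin (t + 1)} {x : Fin (t + 3) → R3}
    (h : (fun i : Fin (t + 2) => x i.castSucc) ∉ Eset (t + 1) ∨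
         (fun i : Fin (t + 1) => x i.castSucc.castSucc) ∈ Dset ∨
         prev (Fin.snoc (removeAt j fun i : Fin (t + 1) => x i.castSucc.castSucc)
             (x (Fin.last (t + 2)) + x j.castSucc.castSucc +
               x (Fin.last (t + 1)).castSucc)) = 0) :
    chiTerm t Dset prev j x = 0 := by
  simp only [chiTerm]
  rcases h with h | h | h
  · rw [Set.indicator_of_notMem h]
    simp
  · rw [Set.indicator_of_notMem (Set.notMem_compl_iff.mpr h)]
    simp
  · rw [h]
    simp

/-- Let `χ ∈ W` have lowest index `m`. Then for every
`n ∈ {m+2, m+4, …}` (here `n = m + 2j + 2`), the function `χ_n` vanishes outside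
`F_n × ℝ³`. -/
theorem statement4 (m : ℕ) (D : Set (Fin (m + 1) → R3)) (χ : FockRep)
    (h : IsW m D χ) (j : ℕ) (x : Fin (m + 2 * j + 3) → R3)
    (hx : x ∉ Tset (m + 2 * j + 2)) :
    χ (m + 2 * j + 2) x = 0 := by
  obtain ⟨hH, hFD, hDsym, hvan, hbase, hstep, hml, hml2⟩ := h
  induction j with
  | zero =>
    have hb : χ (m + 2 * 0 + 2) = chiFormula m D (χ m) := hbase
    rw [hb]
    simp only [chiFormula]
    refine Finset.sum_eq_zero fun i _ => ?_
    refine chiTerm_eq_zero ?_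
    by_cases hE : (fun a : Fin (m + 2) => x a.castSucc) ∈ Eset (m + 1)
    · by_cases hD : (fun a : Fin (m + 1) => x a.castSucc.castSucc) ∈ D
      · exact Or.inr (Or.inl hD)
      · exfalso
        exact hx (mem_Fset_succ (fun hmem => hD (hFD hmem)) hE)
    · exact Or.inl hE
  | succ j ih =>
    have hb : χ (m + 2 * (j + 1) + 2) = chiFormula (m + 2 * j + 2) ∅ (χ (m + 2 * j + 2)) :=
      hstep j
    rw [hb]
    simp only [chiFormula]
    refine Finset.sum_eq_zero fun i _ => ?_
    refine chiTerm_eq_zero ?_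
    by_cases hE : (fun a : Fin (m + 2 * j + 2 + 2) => x a.castSucc) ∈ Eset (m + 2 * j + 2 + 1)
    · refine Or.inr (Or.inr ?_)
      apply ih
      intro hmem
      have hmem' : (fun a : Fin (m + 2 * j + 2) =>
          (Fin.snoc (removeAt i fun b : Fin (m + 2 * j + 3) => x b.castSucc.castSucc)
            (x (Fin.last (m + 2 * j + 2 + 2)) + x i.castSucc.castSucc +
              x (Fin.last (m + 2 * j + 2 + 1)).castSucc) : Fin (m + 2 * j + 3) → R3) a.castSucc)
          ∈ Fset (m + 2 * j + 1) := hmem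
      have heq : (fun a : Fin (m + 2 * j + 2) =>
          (Fin.snoc (removeAt i fun b : Fin (m + 2 * j + 3) => x b.castSucc.castSucc)
            (x (Fin.last (m + 2 * j + 2 + 2)) + x i.castSucc.castSucc +
              x (Fin.last (m + 2 * j + 2 + 1)).castSucc) : Fin (m + 2 * j + 3) → R3) a.castSucc)
          = removeAt i fun b : Fin (m + 2 * j + 3) => x b.castSucc.castSucc := by
        funext a
        exact Fin.snoc_castSucc _ _ _
      rw [heq] at hmem'
      have hnF := lemmaA (fun b : Fin (m + 2 * j + 3) => x b.castSucc.castSucc) i hmem'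
      exact hx (mem_Fset_succ hnF hE)
    · exact Or.inl hE

end
end

section
/- Let χ ∈ W have lowest index m and let n ∈ {m+2, m+4, …}. Then the exact cancellation identity Â⁻_{n,n}χ_n + Â⁺_{n−2}χ_{n−2} = 1_{D_{n−1}×ℝ³} · Â⁺_{n−2}χ_{n−2} holds (as functions of (k₁,…,k_{n−1};p), almost everywhere). In particular, since D_{n−1} = ∅ for n ≥ m+4, Â⁻_{n,n}χ_n + Â⁺_{n−2}χ_{n−2} = 0 for all n ≥ m+4. -/
open MeasureTheory ENNReal

noncomputable section

lemma vol_ball_R3 : (volume (Metric.ball (0:R3) 1)).toReal = 4 / 3 * Real.pi := by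
  rw [EuclideanSpace.volume_ball]
  have hcard : (Fintype.card (Fin 3) : ℝ) = 3 := by simp
  have hG : Real.Gamma ((Fintype.card (Fin 3) : ℝ) / 2 + 1) = 3 / 4 * Real.sqrt Real.pi := by
    rw [hcard]
    have h32 : (3:ℝ)/2 + 1 = (1/2 + 1) + 1 := by ring
    rw [h32, Real.Gamma_add_one (by norm_num), Real.Gamma_add_one (by norm_num),
      Real.Gamma_one_half_eq]
    ring
  have hsp : Real.sqrt Real.pi ^ Fintype.card (Fin 3) = Real.pi * Real.sqrt Real.pi := by
    have : Real.sqrt Real.pi ^ Fintype.card (Fin 3) = Real.sqrt Real.pi ^ 2 * Real.sqrt Real.pi := by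
      norm_num; ring
    rw [this, Real.sq_sqrt Real.pi_pos.le]
  have hspos : (0:ℝ) < Real.sqrt Real.pi := Real.sqrt_pos.2 Real.pi_pos
  rw [hG, hsp]
  rw [ENNReal.toReal_mul, ENNReal.toReal_pow, ENNReal.toReal_ofReal (by norm_num),
    ENNReal.toReal_ofReal (by positivity)]
  field_simp
  ring

lemma integral_radial (a b : ℝ) (ha : 0 < a) (hab : a ≤ b) :
    ∫ w : R3, (Set.Ioo a b).indicator (fun _ => (1:ℝ)) ‖w‖ *
      ((Real.sqrt ‖w‖)⁻¹ * (Real.sqrt (‖w‖ ^ 5))⁻¹)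
    = 4 * Real.pi * (Real.log b - Real.log a) := by
  open Set in
  have key := MeasureTheory.integral_fun_norm_addHaar (volume : Measure R3)
    (fun r => (Set.Ioo a b).indicator (fun _ => (1:ℝ)) r *
      ((Real.sqrt r)⁻¹ * (Real.sqrt (r ^ 5))⁻¹))
  rw [key]
  have hdim : Module.finrank ℝ R3 = 3 := by simp [finrank_euclideanSpace]
  rw [hdim]
  have hinner : ∫ y in Set.Ioi (0:ℝ), y ^ (3 - 1) • ((Set.Ioo a b).indicator (fun _ => (1:ℝ)) y *
      ((Real.sqrt y)⁻¹ * (Real.sqrt (y ^ 5))⁻¹)) = Real.log b - Real.log a := by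
    have hcong : ∀ y ∈ Set.Ioi (0:ℝ), y ^ (3 - 1) • ((Set.Ioo a b).indicator (fun _ => (1:ℝ)) y *
        ((Real.sqrt y)⁻¹ * (Real.sqrt (y ^ 5))⁻¹)) =
        (Set.Ioo a b).indicator (fun r => r⁻¹) y := by
      intro y hy
      rcases em (y ∈ Set.Ioo a b) with hmem | hmem
      · have hy0 : (0:ℝ) < y := hy
        rw [Set.indicator_of_mem hmem, Set.indicator_of_mem hmem]
        have hsq : Real.sqrt y * Real.sqrt (y ^ 5) = y ^ 3 := by
          rw [← Real.sqrt_mul hy0.le]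
          have : y * y ^ 5 = (y ^ 3) ^ 2 := by ring
          rw [this, Real.sqrt_sq (by positivity)]
        have : (Real.sqrt y)⁻¹ * (Real.sqrt (y ^ 5))⁻¹ = (y ^ 3)⁻¹ := by
          rw [← mul_inv, hsq]
        rw [this]
        simp only [smul_eq_mul]
        field_simp
      · rw [Set.indicator_of_notMem hmem, Set.indicator_of_notMem hmem]
        simp
    rw [setIntegral_congr_fun measurableSet_Ioi hcong,
      setIntegral_indicator measurableSet_Ioo,
      show Set.Ioi (0:ℝ) ∩ Set.Ioo a b = Set.Ioo a b from
        Set.inter_eq_self_of_subset_right (fun y hy => lt_trans ha hy.1),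
      ← integral_Ioc_eq_integral_Ioo, ← intervalIntegral.integral_of_le hab,
      integral_inv_of_pos ha (lt_of_lt_of_le ha hab),
      Real.log_div (lt_of_lt_of_le ha hab).ne' ha.ne']
  rw [hinner, measureReal_def, vol_ball_R3]
  simp only [smul_eq_mul, nsmul_eq_mul]
  push_cast
  ring

lemma key_cancel (t : ℕ) (D : Set (Fin (t + 1) → R3)) (prev : (Fin (t + 1) → R3) → ℂ)
    (x : Fin (t + 2) → R3) :
    AminusL (t + 1) (Fin.last (t + 1)) (chiFormula t D prev) x + Aplus t prev x
      = (extendSet D).indicator (Aplus t prev) x := by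
  classical
  set P : ℝ := pfun (fun i : Fin (t + 1) => x i.castSucc) with hPdef
  set indD : ℝ := Dᶜ.indicator (fun _ => (1:ℝ)) (fun i : Fin (t + 1) => x i.castSucc)
    with hindDdef
  have hPpos : 0 < P := by
    rw [hPdef, pfun]
    exact mul_pos (Real.exp_pos _) (Finset.prod_pos (fun i _ => by positivity))
  set S : ℂ := ∑ j : Fin (t + 1), (Real.sqrt ‖x j.castSucc‖ : ℂ)⁻¹ *
      prev (Fin.snoc (removeAt j (fun i : Fin (t + 1) => x i.castSucc))
        (x (Fin.last (t + 1)) + x j.castSucc)) with hSdef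
  set C : ℝ := (-Real.sqrt (↑t + 2) * indD) / (2 * Real.pi * Real.sqrt (↑t + 1) * P) with hCdef
  have hE : ∀ w : R3, (Eset (t + 1)).indicator (fun _ => (1:ℝ))
      (Fin.snoc (fun j : Fin (t + 1) => x j.castSucc) w)
      = (Set.Ioo (Real.exp (P / 2)) (Real.exp P)).indicator (fun _ => (1:ℝ)) ‖w‖ := by
    intro w
    have hmem : (Fin.snoc (fun j : Fin (t + 1) => x j.castSucc) w ∈ Eset (t + 1)) ↔
        ‖w‖ ∈ Set.Ioo (Real.exp (P / 2)) (Real.exp P) := by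
      simp only [Eset, Set.mem_setOf_eq, Set.mem_Ioo, Fin.snoc_castSucc, Fin.snoc_last]
      exact Iff.rfl
    by_cases hw : Fin.snoc (fun j : Fin (t + 1) => x j.castSucc) w ∈ Eset (t + 1)
    · rw [Set.indicator_of_mem hw, Set.indicator_of_mem (hmem.1 hw)]
    · rw [Set.indicator_of_notMem hw, Set.indicator_of_notMem (fun hc => hw (hmem.2 hc))]
  have hintegrand : ∀ w : R3,
      (Real.sqrt ‖w‖ : ℂ)⁻¹ * chiFormula t D prev
        (Fin.snoc (Fin.insertNth (Fin.last (t + 1)) w (fun j : Fin (t + 1) => x j.castSucc))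
          (x (Fin.last (t + 1)) - w)) =
      ((C * ((Set.Ioo (Real.exp (P / 2)) (Real.exp P)).indicator (fun _ => (1:ℝ)) ‖w‖ *
        ((Real.sqrt ‖w‖)⁻¹ * (Real.sqrt (‖w‖ ^ 5))⁻¹)) : ℝ) : ℂ) * S := by
    intro w
    have harg : ∀ j : Fin (t + 1),
        x (Fin.last (t + 1)) - w + x j.castSucc + w = x (Fin.last (t + 1)) + x j.castSucc :=
      fun j => by abel
    rw [Fin.insertNth_last']
    simp only [chiFormula, chiTerm, Fin.snoc_castSucc, Fin.snoc_last, harg, hE]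
    rw [hSdef, Finset.mul_sum, Finset.mul_sum]
    refine Finset.sum_congr rfl fun j _ => ?_
    have hco : (Real.sqrt ‖w‖)⁻¹ *
        ((-Real.sqrt (↑t + 2) *
            (Set.Ioo (Real.exp (P / 2)) (Real.exp P)).indicator (fun _ => (1:ℝ)) ‖w‖ * indD) /
          (2 * Real.pi * Real.sqrt (↑t + 1) * P * Real.sqrt (‖w‖ ^ 5))) =
        C * ((Set.Ioo (Real.exp (P / 2)) (Real.exp P)).indicator (fun _ => (1:ℝ)) ‖w‖ *
          ((Real.sqrt ‖w‖)⁻¹ * (Real.sqrt (‖w‖ ^ 5))⁻¹)) := by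
      rw [hCdef]; ring
    calc (Real.sqrt ‖w‖ : ℂ)⁻¹ *
          (((((-Real.sqrt (↑t + 2) *
              (Set.Ioo (Real.exp (P / 2)) (Real.exp P)).indicator (fun _ => (1:ℝ)) ‖w‖ * indD) /
            (2 * Real.pi * Real.sqrt (↑t + 1) * P * Real.sqrt (‖w‖ ^ 5))) : ℝ) : ℂ) *
            ((Real.sqrt ‖x j.castSucc‖ : ℂ)⁻¹ *
              prev (Fin.snoc (removeAt j (fun i : Fin (t + 1) => x i.castSucc))
                (x (Fin.last (t + 1)) + x j.castSucc))))
        = ((((Real.sqrt ‖w‖)⁻¹ *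
            ((-Real.sqrt (↑t + 2) *
                (Set.Ioo (Real.exp (P / 2)) (Real.exp P)).indicator (fun _ => (1:ℝ)) ‖w‖ * indD) /
              (2 * Real.pi * Real.sqrt (↑t + 1) * P * Real.sqrt (‖w‖ ^ 5)))) : ℝ) : ℂ) *
            ((Real.sqrt ‖x j.castSucc‖ : ℂ)⁻¹ *
              prev (Fin.snoc (removeAt j (fun i : Fin (t + 1) => x i.castSucc))
                (x (Fin.last (t + 1)) + x j.castSucc))) := by
          push_cast; ring
      _ = _ := by rw [hco]
  have hAminus : AminusL (t + 1) (Fin.last (t + 1)) (chiFormula t D prev) x =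
      ((-indD * (Real.sqrt (↑t + 1))⁻¹ : ℝ) : ℂ) * S := by
    rw [AminusL]
    simp only [hintegrand]
    have hInt : (∫ w : R3, ((C * ((Set.Ioo (Real.exp (P / 2)) (Real.exp P)).indicator
          (fun _ => (1:ℝ)) ‖w‖ * ((Real.sqrt ‖w‖)⁻¹ * (Real.sqrt (‖w‖ ^ 5))⁻¹)) : ℝ) : ℂ)) =
        ((∫ w : R3, C * ((Set.Ioo (Real.exp (P / 2)) (Real.exp P)).indicator
          (fun _ => (1:ℝ)) ‖w‖ * ((Real.sqrt ‖w‖)⁻¹ * (Real.sqrt (‖w‖ ^ 5))⁻¹)) : ℝ) : ℂ) :=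
      integral_ofReal
    rw [MeasureTheory.integral_mul_const, hInt, MeasureTheory.integral_const_mul,
      integral_radial _ _ (Real.exp_pos _)
        (Real.exp_le_exp.2 (by linarith)),
      Real.log_exp, Real.log_exp]
    have hsqcast : Real.sqrt (↑(t + 1) + 1) = Real.sqrt (↑t + 2) := by push_cast; ring_nf
    rw [hsqcast]
    have hreal : (Real.sqrt (↑t + 2))⁻¹ * (C * (4 * Real.pi * (P - P / 2))) =
        -indD * (Real.sqrt (↑t + 1))⁻¹ := by
      have hs2 : Real.sqrt (↑t + 2) ≠ 0 := by positivity
      rw [hCdef]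
      field_simp
      ring
    calc (Real.sqrt (↑t + 2) : ℂ)⁻¹ * (((C * (4 * Real.pi * (P - P / 2)) : ℝ) : ℂ) * S)
        = (((Real.sqrt (↑t + 2))⁻¹ * (C * (4 * Real.pi * (P - P / 2))) : ℝ) : ℂ) * S := by
          push_cast; ring
      _ = _ := by rw [hreal]
  have hAplus : Aplus t prev x = ((Real.sqrt (↑t + 1) : ℝ) : ℂ)⁻¹ * S := rfl
  rw [hAminus, hAplus]
  by_cases hD : (fun i : Fin (t + 1) => x i.castSucc) ∈ D
  · have hind : indD = 0 := Set.indicator_of_notMem (by simp [hD]) _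
    have hx : x ∈ extendSet D := hD
    rw [Set.indicator_of_mem hx, hAplus, hind]
    push_cast
    ring
  · have hind : indD = 1 := Set.indicator_of_mem (by simp [hD]) _
    have hx : x ∉ extendSet D := hD
    rw [Set.indicator_of_notMem hx, hind]
    push_cast
    ring

/-- Exact cancellation: for `χ ∈ W` with lowest index `m`,
`Â⁻_{n,n}χ_n + Â⁺_{n−2}χ_{n−2} = 1_{D_{n−1}×ℝ³}·Â⁺_{n−2}χ_{n−2}` almost everywhere
for `n = m + 2` (where `D_{n−1} = D`), and, since `D_{n−1} = ∅` for `n ≥ m + 4`,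
`Â⁻_{n,n}χ_n + Â⁺_{n−2}χ_{n−2} = 0` almost everywhere for all `n = m + 2j + 4`. -/
theorem statement7 (m : ℕ) (D : Set (Fin (m + 1) → R3)) (χ : FockRep)
    (h : IsW m D χ) :
    (fun x => AminusL (m + 1) (Fin.last (m + 1)) (χ (m + 2)) x + Aplus m (χ m) x)
        =ᵐ[volume] (extendSet D).indicator (Aplus m (χ m)) ∧
    ∀ j : ℕ,
      (fun x => AminusL (m + 2 * j + 3) (Fin.last (m + 2 * j + 3)) (χ (m + 2 * j + 4)) x
          + Aplus (m + 2 * j + 2) (χ (m + 2 * j + 2)) x) =ᵐ[volume] 0 := by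
  obtain ⟨-, -, -, -, h2, h4, -, -⟩ := h
  constructor
  · rw [h2]
    exact Filter.Eventually.of_forall (fun x => key_cancel m D (χ m) x)
  · intro j
    rw [h4 j]
    refine Filter.Eventually.of_forall (fun x => ?_)
    have hk := key_cancel (m + 2 * j + 2) ∅ (χ (m + 2 * j + 2)) x
    simpa [extendSet, Set.indicator_apply, Set.mem_setOf_eq] using hk

end
end

section
/- Let χ ∈ W have lowest index m and admissible set D_{m+1}. Then Σ_{n ∈ {m+2, m+4, …}} ‖Â⁻_{n,n}χ_n + Â⁺_{n−2}χ_{n−2}‖²_{L²} = ‖1_{D_{m+1}×ℝ³} Â⁺_m χ_m‖²_{L²}, and this quantity is finite. -/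
open MeasureTheory ENNReal

noncomputable section

open Real in
lemma volR3 : (volume (Metric.ball (0:R3) 1)).toReal = 4/3 * π := by
  rw [EuclideanSpace.volume_ball]
  have h3 : Real.Gamma ((Fintype.card (Fin 3) : ℝ) / 2 + 1) = 3/4 * Real.sqrt π := by
    rw [Fintype.card_fin]
    have : ((3:ℕ):ℝ)/2 + 1 = (1/2 + 1) + 1 := by norm_num
    rw [this, Real.Gamma_add_one (by norm_num), Real.Gamma_add_one (by norm_num),
      Real.Gamma_one_half_eq]
    ring
  rw [h3]
  have hs : Real.sqrt π ^ (Fintype.card (Fin 3)) = π * Real.sqrt π := by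
    rw [Fintype.card_fin, pow_succ, sq_sqrt pi_pos.le]
  rw [hs]
  have hne : Real.sqrt π ≠ 0 := by positivity
  rw [ENNReal.ofReal_one, one_pow, one_mul, ENNReal.toReal_ofReal (by positivity)]
  field_simp

open Real in
lemma integral_shell (P c : ℝ) (hP : 0 < P) :
    ∫ w : R3, (Real.sqrt ‖w‖)⁻¹ *
      ((Set.Ioo (Real.exp (P/2)) (Real.exp P)).indicator 1 ‖w‖ * c /
        (P * Real.sqrt (‖w‖ ^ 5))) = 2 * π * c := by
  set a := Real.exp (P/2) with ha_def
  set b := Real.exp P with hb_def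
  have ha : 0 < a := Real.exp_pos _
  have hab : a < b := Real.exp_lt_exp.2 (by linarith)
  rw [integral_fun_norm_addHaar (volume : Measure R3)
      (fun r => (Real.sqrt r)⁻¹ * ((Set.Ioo a b).indicator 1 r * c / (P * Real.sqrt (r ^ 5))))]
  have hdim : Module.finrank ℝ R3 = 3 := finrank_euclideanSpace_fin
  rw [hdim]
  have hfun : (fun y : ℝ => y ^ (3 - 1) •
      ((Real.sqrt y)⁻¹ * ((Set.Ioo a b).indicator 1 y * c / (P * Real.sqrt (y ^ 5)))))
      = Set.indicator (Set.Ioo a b) (fun y => (c / P) * y⁻¹) := by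
    funext y
    by_cases hy : y ∈ Set.Ioo a b
    · have hy0 : 0 < y := lt_trans ha hy.1
      have h5 : Real.sqrt (y ^ 5) = y ^ 2 * Real.sqrt y := by
        rw [show y ^ 5 = (y ^ 2) ^ 2 * y by ring, Real.sqrt_mul (by positivity),
          Real.sqrt_sq (by positivity)]
      rw [Set.indicator_of_mem hy, Set.indicator_of_mem hy, Pi.one_apply, h5, smul_eq_mul]
      have hsy : Real.sqrt y ≠ 0 := by positivity
      have h2 : Real.sqrt y * Real.sqrt y = y := Real.mul_self_sqrt hy0.le
      field_simp
      ring_nf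
      rw [show Real.sqrt y ^ 2 = Real.sqrt y * Real.sqrt y by ring, h2]
      ring
    · rw [Set.indicator_of_notMem hy, Set.indicator_of_notMem hy]
      simp
  rw [hfun, setIntegral_indicator measurableSet_Ioo,
    Set.inter_eq_right.mpr ((Set.Ioo_subset_Ioi_self).trans (Set.Ioi_subset_Ioi ha.le)),
    MeasureTheory.integral_const_mul, ← MeasureTheory.integral_Ioc_eq_integral_Ioo,
    ← intervalIntegral.integral_of_le hab.le,
    _root_.integral_inv (Set.notMem_uIcc_of_lt ha (lt_trans ha hab)),
    Real.log_div (Real.exp_ne_zero _) (Real.exp_ne_zero _), Real.log_exp, Real.log_exp,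
    measureReal_def, volR3, smul_eq_mul, nsmul_eq_mul]
  field_simp
  ring

lemma integral_complex_ofReal' {α : Type*} [MeasurableSpace α] {μ : Measure α} (f : α → ℝ) :
    ∫ x, ((f x : ℝ) : ℂ) ∂μ = ((∫ x, f x ∂μ : ℝ) : ℂ) := integral_ofReal

lemma pfun_pos {n : ℕ} (k : Fin n → R3) : 0 < pfun k := by
  unfold pfun
  positivity


lemma key (t : ℕ) (Dset : Set (Fin (t + 1) → R3)) (prev : (Fin (t + 1) → R3) → ℂ) :
    (fun x => AminusL (t + 1) (Fin.last (t + 1)) (chiFormula t Dset prev) x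
      + Aplus t prev x) = (extendSet Dset).indicator (Aplus t prev) := by
  funext x
  set xf : Fin (t + 1) → R3 := fun i => x i.castSucc with hxf
  set P : ℝ := pfun xf with hP
  have hPpos : 0 < P := pfun_pos xf
  set a : ℝ := Real.exp (P / 2) with ha
  set b : ℝ := Real.exp P with hb
  set d : ℝ := Dsetᶜ.indicator (fun _ => (1 : ℝ)) xf with hd
  set c : ℝ := -Real.sqrt (t + 2) * d / (2 * Real.pi * Real.sqrt (t + 1)) with hc
  set S : ℂ := ∑ i : Fin (t + 1),
      (Real.sqrt ‖x i.castSucc‖ : ℂ)⁻¹ *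
        prev (Fin.snoc (removeAt i fun j : Fin (t + 1) => x j.castSucc)
          (x (Fin.last (t + 1)) + x i.castSucc)) with hS
  have hAplus : Aplus t prev x = (Real.sqrt (t + 1) : ℂ)⁻¹ * S := rfl
  -- Step 1 : rewrite the integrand
  have harg : ∀ w : R3,
      (Real.sqrt ‖w‖ : ℂ)⁻¹ * chiFormula t Dset prev
        (Fin.snoc (Fin.insertNth (Fin.last (t + 1)) w fun j : Fin (t + 1) => x j.castSucc)
          (x (Fin.last (t + 1)) - w))
      = (((Real.sqrt ‖w‖)⁻¹ *
          ((Set.Ioo a b).indicator 1 ‖w‖ * c / (P * Real.sqrt (‖w‖ ^ 5))) : ℝ) : ℂ) * S := by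
    intro w
    rw [Fin.insertNth_last', ← hxf]
    have hkk : (fun i : Fin (t + 2) =>
        Fin.snoc (α := fun _ => R3) (Fin.snoc xf w) (x (Fin.last (t + 1)) - w) i.castSucc)
        = Fin.snoc xf w := funext fun i => Fin.snoc_castSucc ..
    have hkf : (fun i : Fin (t + 1) => Fin.snoc (α := fun _ => R3) xf w i.castSucc) = xf :=
      funext fun i => Fin.snoc_castSucc ..
    have hE : (Eset (t + 1)).indicator (fun _ => (1 : ℝ)) (Fin.snoc xf w)
        = (Set.Ioo a b).indicator 1 ‖w‖ := by
      have hiff : Fin.snoc (α := fun _ => R3) xf w ∈ Eset (t + 1) ↔ ‖w‖ ∈ Set.Ioo a b := by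
        simp only [Eset, Set.mem_setOf_eq, hkf, Fin.snoc_last, Set.mem_Ioo, ha, hb, hP]
      by_cases hw : ‖w‖ ∈ Set.Ioo a b
      · rw [Set.indicator_of_mem (hiff.2 hw), Set.indicator_of_mem hw, Pi.one_apply]
      · rw [Set.indicator_of_notMem (fun hmem => hw (hiff.1 hmem)), Set.indicator_of_notMem hw]
    simp only [chiFormula, chiTerm, hkk, hkf, Fin.snoc_last, Fin.snoc_castSucc, hE]
    rw [Finset.mul_sum, Finset.mul_sum]
    refine Finset.sum_congr rfl fun j _ => ?_
    have hargv : x (Fin.last (t + 1)) - w + xf j + w = x (Fin.last (t + 1)) + xf j := by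
      abel
    rw [hargv]
    have hcoef : ((-Real.sqrt (t + 2) * ((Set.Ioo a b).indicator 1 ‖w‖) * d) /
        (2 * Real.pi * Real.sqrt (t + 1) * P * Real.sqrt (‖w‖ ^ 5)) : ℝ)
        = (Real.sqrt ‖w‖) * ((Real.sqrt ‖w‖)⁻¹ *
            ((Set.Ioo a b).indicator 1 ‖w‖ * c / (P * Real.sqrt (‖w‖ ^ 5)))) := by
      rcases eq_or_ne (Real.sqrt ‖w‖) 0 with h0 | h0
      · have hw0 : ‖w‖ = 0 := le_antisymm (Real.sqrt_eq_zero'.1 h0) (norm_nonneg w)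
        rw [hw0]
        norm_num [Real.sqrt_zero]
      · rw [mul_inv_cancel_left₀ h0, hc]
        ring
    rcases eq_or_ne (Real.sqrt ‖w‖) 0 with h0 | h0
    · simp [h0]
    · have hs : ((Real.sqrt ‖w‖ : ℝ) : ℂ) ≠ 0 := Complex.ofReal_ne_zero.2 h0
      rw [hcoef, Complex.ofReal_mul, mul_assoc ((Real.sqrt ‖w‖ : ℝ) : ℂ), inv_mul_cancel_left₀ hs]
  -- Step 2 : compute the integral
  have hsqrt : ((t + 1 : ℕ) : ℝ) + 1 = (t : ℝ) + 2 := by push_cast; ring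
  have hA : AminusL (t + 1) (Fin.last (t + 1)) (chiFormula t Dset prev) x
      = (Real.sqrt ((t : ℝ) + 2) : ℂ)⁻¹ * (((2 * Real.pi * c : ℝ) : ℂ) * S) := by
    show (Real.sqrt ((t + 1 : ℕ) + 1) : ℂ)⁻¹ * _ = _
    rw [hsqrt]
    congr 1
    rw [show (fun w : R3 => (Real.sqrt ‖w‖ : ℂ)⁻¹ * chiFormula t Dset prev
        (Fin.snoc (Fin.insertNth (Fin.last (t + 1)) w fun j : Fin (t + 1) => x j.castSucc)
          (x (Fin.last (t + 1)) - w)))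
      = fun w : R3 => (((Real.sqrt ‖w‖)⁻¹ *
          ((Set.Ioo a b).indicator 1 ‖w‖ * c / (P * Real.sqrt (‖w‖ ^ 5))) : ℝ) : ℂ) * S
      from funext harg]
    rw [MeasureTheory.integral_mul_const, integral_complex_ofReal', ha, hb,
      integral_shell P c hPpos]
  have h2pc : (2 * Real.pi * c : ℝ) = -(d / Real.sqrt ((t : ℝ) + 1)) * Real.sqrt ((t : ℝ) + 2) := by
    rw [hc]
    have hpi : (Real.pi : ℝ) ≠ 0 := Real.pi_ne_zero
    field_simp
  have hq : ((Real.sqrt ((t : ℝ) + 2) : ℝ) : ℂ) ≠ 0 :=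
    Complex.ofReal_ne_zero.2 (by positivity)
  have hA' : AminusL (t + 1) (Fin.last (t + 1)) (chiFormula t Dset prev) x
      = -((d : ℂ) * ((Real.sqrt ((t : ℝ) + 1) : ℂ)⁻¹ * S)) := by
    rw [hA, h2pc, Complex.ofReal_mul]
    rw [show ((Real.sqrt ((t : ℝ) + 2) : ℝ) : ℂ)⁻¹ *
        ((((-(d / Real.sqrt ((t : ℝ) + 1)) : ℝ) : ℂ) * ((Real.sqrt ((t : ℝ) + 2) : ℝ) : ℂ)) * S)
        = (((Real.sqrt ((t : ℝ) + 2) : ℝ) : ℂ) * ((Real.sqrt ((t : ℝ) + 2) : ℝ) : ℂ)⁻¹) *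
          ((((-(d / Real.sqrt ((t : ℝ) + 1)) : ℝ) : ℂ)) * S) from by ring,
      mul_inv_cancel₀ hq, one_mul]
    push_cast
    ring
  by_cases hD : xf ∈ Dset
  · have hd0 : d = 0 := by rw [hd]; exact Set.indicator_of_notMem (by simpa using hD) _
    have hxd : x ∈ extendSet Dset := hD
    rw [Set.indicator_of_mem hxd, hA', hd0, hAplus]
    push_cast
    ring
  · have hd1 : d = 1 := by rw [hd]; exact Set.indicator_of_mem (by simpa using hD) _
    have hxd : x ∉ extendSet Dset := hD
    rw [Set.indicator_of_notMem hxd, hA', hd1, hAplus]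
    push_cast
    ring

/-- For `χ ∈ W` with lowest index `m` and admissible set `D`:
`∑_{n ∈ {m+2, m+4, …}} ‖Â⁻_{n,n}χ_n + Â⁺_{n−2}χ_{n−2}‖²_{L²}
  = ‖1_{D×ℝ³} Â⁺_m χ_m‖²_{L²}`, and this quantity is finite.
(Here `n = m + 2j + 2` for `j : ℕ`.) -/
theorem statement8 (m : ℕ) (D : Set (Fin (m + 1) → R3)) (χ : FockRep)
    (h : IsW m D χ) :
    (∑' j : ℕ,
        eLpNorm (fun x =>
          AminusL (m + 2 * j + 1) (Fin.last (m + 2 * j + 1)) (χ (m + 2 * j + 2)) x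
            + Aplus (m + 2 * j) (χ (m + 2 * j)) x) 2 volume ^ 2)
      = eLpNorm ((extendSet D).indicator (Aplus m (χ m))) 2 volume ^ 2 ∧
    eLpNorm ((extendSet D).indicator (Aplus m (χ m))) 2 volume ^ 2 < ⊤ := by
  obtain ⟨hmem, hFD, hsymm, hvan, hrec0, hrecj, hAm, hAp⟩ := h
  have hzero : ∀ j : ℕ, j ≠ 0 →
      eLpNorm (fun x =>
          AminusL (m + 2 * j + 1) (Fin.last (m + 2 * j + 1)) (χ (m + 2 * j + 2)) x
            + Aplus (m + 2 * j) (χ (m + 2 * j)) x) 2 volume ^ 2 = 0 := by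
    intro j hj
    obtain ⟨j', rfl⟩ := Nat.exists_eq_succ_of_ne_zero hj
    show eLpNorm (fun x =>
        AminusL (m + 2 * j' + 2 + 1) (Fin.last (m + 2 * j' + 2 + 1)) (χ (m + 2 * j' + 4)) x
          + Aplus (m + 2 * j' + 2) (χ (m + 2 * j' + 2)) x) 2 volume ^ 2 = 0
    rw [hrecj j', key (m + 2 * j' + 2) ∅ (χ (m + 2 * j' + 2))]
    have he : extendSet (∅ : Set (Fin (m + 2 * j' + 2 + 1) → R3)) = ∅ := by
      ext k; simp [extendSet]
    rw [he, Set.indicator_empty]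
    simp [eLpNorm_zero]
  refine ⟨?_, ENNReal.pow_lt_top hAp.2⟩
  rw [tsum_eq_single 0 hzero]
  show eLpNorm (fun x =>
      AminusL (m + 1) (Fin.last (m + 1)) (χ (m + 2)) x + Aplus m (χ m) x) 2 volume ^ 2 = _
  rw [hrec0, key m D (χ m)]

end
end
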